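/- Let A ∈ ℝ^{m×n} and let (I,J) be a forbidden pattern in A with minimum cardinality |I| = |J| ≥ 3. Then for every column j ∈ [n] ∖ J and all rows i_s, i_t ∈ I, one has a_{i_s j}·a_{i_t j} ≥ 0; that is, restricted to the rows of I, no column outside J contains entries of opposite signs. -/

import Mathlib

open Matrix Finset
open scoped Classical
open Fin.NatCast Fin.CommRing

/-- `A` has a forbidden pattern: there are `lam ≥ 1` rows and columns, with
orderings (injective enumerations) `r`, `c`, such that in column `c l` all rows
of the pattern other than `r l`, `r (l+1)` vanish (cyclically), and
`A (r l) (c l) * A (r (l+1)) (c l) < 0` for every `l`. -/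
def HasFP {m n : ℕ} (A : Matrix (Fin m) (Fin n) ℝ) : Prop :=
  ∃ lam : ℕ, ∃ r : Fin (lam + 1) → Fin m, ∃ c : Fin (lam + 1) → Fin n,
    Function.Injective r ∧ Function.Injective c ∧
    (∀ l k : Fin (lam + 1), k ≠ l → k ≠ l + 1 → A (r k) (c l) = 0) ∧
    (∀ l : Fin (lam + 1), A (r l) (c l) * A (r (l + 1)) (c l) < 0)

/-- `A`, restricted to the set `S` of remaining columns, can be eliminated at column `j`. -/
def CanElim {m n : ℕ} (A : Matrix (Fin m) (Fin n) ℝ) (S : Finset (Fin n)) (j : Fin n) : Prop :=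
  (∀ i, 0 < A i j → ∀ j' ∈ S, j' ≠ j → A i j' = 0) ∨
  (∀ i, A i j < 0 → ∀ j' ∈ S, j' ≠ j → A i j' = 0)

/-- `A` has an elimination ordering. -/
def HasEO {m n : ℕ} (A : Matrix (Fin m) (Fin n) ℝ) : Prop :=
  ∃ e : Fin n ≃ Fin n, ∀ t : Fin n,
    CanElim A (Finset.univ.filter fun c => ∀ s : Fin n, s < t → e s ≠ c) (e t)

/-- `x ∈ {0,…,d}ⁿ` is a feasible solution of the integer linear system `A x ≥ b`. -/
def Feas {m n : ℕ} (d : ℕ) (A : Matrix (Fin m) (Fin n) ℝ) (b : Fin m → ℝ)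
    (x : Fin n → ℕ) : Prop :=
  (∀ j, x j ≤ d) ∧ ∀ i, b i ≤ ∑ j, A i j * (x j : ℝ)

/-- Adjacency in the solution graph `G(A,b)`: both endpoints are feasible and
their Hamming distance is `1`. -/
def SGAdj {m n : ℕ} (d : ℕ) (A : Matrix (Fin m) (Fin n) ℝ) (b : Fin m → ℝ)
    (x y : Fin n → ℕ) : Prop :=
  Feas d A b x ∧ Feas d A b y ∧ hammingDist x y = 1

/-- The solution graph `G(A,b)` is connected. -/
def SGConn {m n : ℕ} (d : ℕ) (A : Matrix (Fin m) (Fin n) ℝ) (b : Fin m → ℝ) : Prop :=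
  ∀ x y : Fin n → ℕ, Feas d A b x → Feas d A b y →
    Relation.ReflTransGen (SGAdj d A b) x y

/-- `A` is universally connected. -/
def UnivConn {m n : ℕ} (d : ℕ) (A : Matrix (Fin m) (Fin n) ℝ) : Prop :=
  ∀ b : Fin m → ℝ, SGConn d A b

/-- `(r, c)` is a forbidden pattern of size `lam + 1 ≥ 3` of minimum cardinality. -/
theorem stmt2 {m n lam : ℕ} (A : Matrix (Fin m) (Fin n) ℝ) (hlam : 2 ≤ lam)
    (r : Fin (lam + 1) → Fin m) (c : Fin (lam + 1) → Fin n)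
    (hr : Function.Injective r) (hc : Function.Injective c)
    (hz : ∀ l k : Fin (lam + 1), k ≠ l → k ≠ l + 1 → A (r k) (c l) = 0)
    (hs : ∀ l : Fin (lam + 1), A (r l) (c l) * A (r (l + 1)) (c l) < 0)
    (hmin : ∀ lam₀ : ℕ,
      ∀ r₀ : Fin (lam₀ + 1) → Fin m, ∀ c₀ : Fin (lam₀ + 1) → Fin n,
        Function.Injective r₀ → Function.Injective c₀ →
        (∀ l k : Fin (lam₀ + 1), k ≠ l → k ≠ l + 1 → A (r₀ k) (c₀ l) = 0) →
        (∀ l : Fin (lam₀ + 1), A (r₀ l) (c₀ l) * A (r₀ (l + 1)) (c₀ l) < 0) →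
        lam ≤ lam₀) :
    ∀ j : Fin n, (∀ l : Fin (lam + 1), c l ≠ j) →
      ∀ s t : Fin (lam + 1), 0 ≤ A (r s) j * A (r t) j := by
  intro j hj s t
  by_contra hneg
  push_neg at hneg
  have hst : s ≠ t := by
    rintro rfl
    exact absurd (mul_self_nonneg (A (r s) j)) (not_le.mpr hneg)
  have hcastinj : ∀ a b : ℕ, a ≤ lam → b ≤ lam → (a : Fin (lam+1)) = (b : Fin (lam+1)) → a = b := by
    intro a b ha hb h
    rw [← Fin.val_cast_of_lt (show a < lam+1 by omega),
        ← Fin.val_cast_of_lt (show b < lam+1 by omega), h]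
  have hQ0 : ∃ d : ℕ, 0 < d ∧ d ≤ lam ∧
      ∃ u : Fin (lam+1), A (r u) j * A (r (u + (d : Fin (lam+1)))) j < 0 := by
    refine ⟨(t - s).val, ?_, by omega, s, ?_⟩
    · have h1 : t - s ≠ 0 := sub_ne_zero.mpr hst.symm
      exact Nat.pos_of_ne_zero fun h => h1 (Fin.ext (by simp [h]))
    · rw [Fin.cast_val_eq_self]
      have : s + (t - s) = t := by ring
      rw [this]; exact hneg
  set d : ℕ := Nat.find hQ0 with hd_def
  obtain ⟨hdpos, hdle, u, hu⟩ := Nat.find_spec hQ0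
  -- intermediate entries of column j vanish
  have hzero : ∀ k : ℕ, 0 < k → k < d → A (r (u + (k : Fin (lam+1)))) j = 0 := by
    intro k hk1 hk2
    by_contra hbk
    have hdisj : A (r u) j * A (r (u + (k : Fin (lam+1)))) j < 0 ∨
        A (r (u + (k : Fin (lam+1)))) j * A (r (u + (d : Fin (lam+1)))) j < 0 := by
      by_contra hcon
      push_neg at hcon
      obtain ⟨h1, h2⟩ := hcon
      have hbk2 : 0 < (A (r (u + (k : Fin (lam+1)))) j)^2 := by positivity
      nlinarith [mul_nonneg h1 h2]
    rcases hdisj with h | h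
    · exact Nat.find_min hQ0 hk2 ⟨hk1, by omega, u, h⟩
    · refine Nat.find_min hQ0 (show d - k < d by omega) ⟨by omega, by omega, u + (k : Fin (lam+1)), ?_⟩
      have he : u + (k : Fin (lam+1)) + ((d - k : ℕ) : Fin (lam+1)) = u + (d : Fin (lam+1)) := by
        rw [add_assoc, ← Nat.cast_add]
        congr 2
        omega
      rw [he]; exact h
  -- the forward-arc pattern of size d+1
  have hdlam : lam ≤ d := by
    obtain ⟨d', hd'⟩ : ∃ d', d = d' + 1 := ⟨d - 1, by omega⟩
    set r₀ : Fin (d' + 1 + 1) → Fin m := fun k => r (u + (k.val : Fin (lam+1))) with hr₀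
    set c₀ : Fin (d' + 1 + 1) → Fin n := fun k =>
      if k.val = d then j else c (u + (k.val : Fin (lam+1))) with hc₀
    have hvlt : ∀ k : Fin (d' + 1 + 1), k.val ≤ lam := by
      intro k; have := k.isLt; omega
    have hembinj : ∀ k k' : Fin (d' + 1 + 1),
        u + (k.val : Fin (lam+1)) = u + (k'.val : Fin (lam+1)) → k = k' := by
      intro k k' h
      have := hcastinj k.val k'.val (hvlt k) (hvlt k') (by exact add_left_cancel h)
      exact Fin.ext this
    have hr₀inj : Function.Injective r₀ := fun k k' h => hembinj _ _ (hr h)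
    have hc₀inj : Function.Injective c₀ := by
      intro k k' h
      simp only [hc₀] at h
      split_ifs at h with h1 h2 h2
      · exact Fin.ext (by omega)
      · exact absurd h.symm (hj _)
      · exact absurd h (hj _)
      · exact hembinj _ _ (hc h)
    have hval_add_one : ∀ l : Fin (d' + 1 + 1), l.val < d → (l+1).val = l.val + 1 := by
      intro l hl
      exact Fin.val_add_one_of_lt (by rw [Fin.lt_iff_val_lt_val, Fin.val_last]; omega)
    have hz₀ : ∀ l k : Fin (d' + 1 + 1), k ≠ l → k ≠ l + 1 → A (r₀ k) (c₀ l) = 0 := by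
      intro l k hkl hkl1
      by_cases hld : l.val = d
      · have hlast : l = Fin.last (d' + 1) := Fin.eq_last_of_not_lt (by omega)
        have hl1 : l + 1 = 0 := by rw [hlast, Fin.last_add_one]
        have hk0 : k.val ≠ 0 := by
          intro h; exact hkl1 (by rw [hl1]; exact Fin.ext (by simpa using h))
        have hkd : k.val ≠ d := by
          intro h; exact hkl (Fin.ext (by omega))
        simp only [hc₀, if_pos hld]
        exact hzero k.val (by omega) (by have := k.isLt; omega)
      · have hlval : (l+1).val = l.val + 1 := hval_add_one l (by omega)
        simp only [hc₀, if_neg hld]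
        refine hz (u + (l.val : Fin (lam+1))) (u + (k.val : Fin (lam+1))) ?_ ?_
        · intro h; exact hkl (hembinj _ _ h)
        · intro h
          have h2 : u + ((l.val + 1 : ℕ) : Fin (lam+1)) = u + (l.val : Fin (lam+1)) + 1 := by
            push_cast; ring
          have := hcastinj k.val (l.val + 1) (hvlt k) (by have := l.isLt; omega)
            (add_left_cancel (h.trans h2.symm))
          exact hkl1 (Fin.ext (by omega))
    have hs₀ : ∀ l : Fin (d' + 1 + 1), A (r₀ l) (c₀ l) * A (r₀ (l + 1)) (c₀ l) < 0 := by
      intro l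
      by_cases hld : l.val = d
      · have hlast : l = Fin.last (d' + 1) := Fin.eq_last_of_not_lt (by omega)
        have hl1 : l + 1 = 0 := by rw [hlast, Fin.last_add_one]
        simp only [hc₀, hr₀, if_pos hld, hld, hl1]
        simp only [Fin.val_zero, Nat.cast_zero, add_zero]
        rw [mul_comm]
        exact hu
      · have hlval : (l+1).val = l.val + 1 := hval_add_one l (by omega)
        simp only [hc₀, hr₀, if_neg hld, hlval]
        have he : u + ((l.val + 1 : ℕ) : Fin (lam+1)) = u + (l.val : Fin (lam+1)) + 1 := by
          push_cast; ring
        rw [he]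
        exact hs (u + (l.val : Fin (lam+1)))
    have := hmin (d' + 1) r₀ c₀ hr₀inj hc₀inj hz₀ hs₀
    omega
  have hd_eq : d = lam := le_antisymm hdle hdlam
  -- now the pair is cyclically adjacent: build a pattern of size 2
  have hlam_cast : ((lam : ℕ) : Fin (lam+1)) + 1 = 0 := by
    apply Fin.ext
    simp [Fin.val_add, Fin.val_cast_of_lt (Nat.lt_succ_self lam)]
  have hne : u + ((lam : ℕ) : Fin (lam+1)) ≠ u := by
    intro h
    have h0 : ((lam : ℕ) : Fin (lam+1)) = 0 := by
      have := add_left_cancel (h.trans (add_zero u).symm)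
      exact this
    have := hcastinj lam 0 le_rfl (by omega) (by simpa using h0)
    omega
  set r₁ : Fin 2 → Fin m := ![r (u + ((lam : ℕ) : Fin (lam+1))), r u] with hr₁
  set c₁ : Fin 2 → Fin n := ![c (u + ((lam : ℕ) : Fin (lam+1))), j] with hc₁
  have hr₁inj : Function.Injective r₁ := by
    intro a b h
    fin_cases a <;> fin_cases b
    · rfl
    · simp only [hr₁, Matrix.cons_val_zero, Matrix.cons_val_one, Matrix.head_cons] at h
      exact absurd (hr h) hne
    · simp only [hr₁, Matrix.cons_val_zero, Matrix.cons_val_one, Matrix.head_cons] at h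
      exact absurd (hr h.symm) hne
    · rfl
  have hc₁inj : Function.Injective c₁ := by
    intro a b h
    fin_cases a <;> fin_cases b
    · rfl
    · simp only [hc₁, Matrix.cons_val_zero, Matrix.cons_val_one, Matrix.head_cons] at h
      exact absurd h (hj _)
    · simp only [hc₁, Matrix.cons_val_zero, Matrix.cons_val_one, Matrix.head_cons] at h
      exact absurd h.symm (hj _)
    · rfl
  have hz₁ : ∀ l k : Fin 2, k ≠ l → k ≠ l + 1 → A (r₁ k) (c₁ l) = 0 := by
    intro l k hkl hkl1
    fin_cases l <;> fin_cases k <;>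
      first | exact absurd (by decide) hkl | exact absurd (by decide) hkl1
  have hs₁ : ∀ l : Fin 2, A (r₁ l) (c₁ l) * A (r₁ (l + 1)) (c₁ l) < 0 := by
    intro l
    fin_cases l
    · show A (r (u + ((lam : ℕ) : Fin (lam+1)))) (c (u + ((lam : ℕ) : Fin (lam+1)))) *
        A (r u) (c (u + ((lam : ℕ) : Fin (lam+1)))) < 0
      have := hs (u + ((lam : ℕ) : Fin (lam+1)))
      rwa [add_assoc, hlam_cast, add_zero] at this
    · show A (r u) j * A (r (u + ((lam : ℕ) : Fin (lam+1)))) j < 0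
      have hcast : ((lam : ℕ) : Fin (lam+1)) = ((d : ℕ) : Fin (lam+1)) := by rw [hd_eq]
      rw [hcast]
      exact hu
  have := hmin 1 r₁ c₁ hr₁inj hc₁inj hz₁ hs₁
  omega
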